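/- Let (Ω, P) be a probability space, u : Ω → ℝ^L a random vector whose law is the probability measure μ on ℝ^L, ν ∈ L²(Ω, P), and ψ ∈ L²(ℝ^L, μ). Let M ⊂ L²(ℝ^L, μ) be a finite-dimensional subspace, g ∈ L²(ℝ^L, μ) with g ∉ M, and M' := M + span{g}. Define d := ψ(u) + ν, and assume E[f(u) ν] = 0 for every f ∈ M' and E[ψ(u) ν] = 0. Assume the approximate-linear-dependency condition ‖g − P_M(g)‖² ≥ η ‖g‖² holds for some η ∈ [0, 1]. Write the best approximation P_{M'}(ψ) uniquely as P_{M'}(ψ) = m + h* g with m ∈ M and h* ∈ ℝ. Then the reduction of the minimum mean squared error satisfies E[(d − (P_M ψ)(u))²] − E[(d − (P_{M'} ψ)(u))²] ≥ (h*)² ‖g‖² η. -/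

import Mathlib

open MeasureTheory
open scoped RealInnerProductSpace

set_option maxHeartbeats 1000000 in
/-- Under the ALD condition `‖g - P_M g‖² ≥ η‖g‖²`, enlarging the dictionary subspace `M` to
`M' = M + span{g}` reduces the MMSE by at least `(h*)²‖g‖²η`, where `h*` is the coefficient of
`g` in the best approximation `P_{M'}(ψ) = m + h* g`. -/
theorem stmt6 {Ω : Type*} [MeasurableSpace Ω] (P : Measure Ω) [IsProbabilityMeasure P]
    {L : ℕ} (μ : Measure (Fin L → ℝ)) [IsProbabilityMeasure μ]
    (u : Ω → (Fin L → ℝ)) (hu : Measurable u) (hlaw : P.map u = μ)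
    (ν : Ω → ℝ) (hν : MemLp ν 2 P)
    (ψ g : Lp ℝ 2 μ)
    (M M' : Submodule ℝ (Lp ℝ 2 μ)) [FiniteDimensional ℝ M] [FiniteDimensional ℝ M']
    (hgM : g ∉ M) (hM' : M' = M ⊔ Submodule.span ℝ {g})
    (d : Ω → ℝ) (hd : d = fun ω => ψ (u ω) + ν ω)
    (horth : ∀ f ∈ M', ∫ ω, (f : Lp ℝ 2 μ) (u ω) * ν ω ∂P = 0)
    (horthψ : ∫ ω, ψ (u ω) * ν ω ∂P = 0)
    (η : ℝ) (hη0 : 0 ≤ η) (hη1 : η ≤ 1)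
    (hALD : η * ‖g‖ ^ 2 ≤ ‖g - (Submodule.orthogonalProjection M g : Lp ℝ 2 μ)‖ ^ 2)
    (m : Lp ℝ 2 μ) (hm : m ∈ M) (hstar : ℝ)
    (hdecomp : (Submodule.orthogonalProjection M' ψ : Lp ℝ 2 μ) = m + hstar • g) :
    hstar ^ 2 * ‖g‖ ^ 2 * η
      ≤ (∫ ω, (d ω - (Submodule.orthogonalProjection M ψ : Lp ℝ 2 μ) (u ω)) ^ 2 ∂P)
        - ∫ ω, (d ω - (Submodule.orthogonalProjection M' ψ : Lp ℝ 2 μ) (u ω)) ^ 2 ∂P := by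
  classical
  have hMle : M ≤ M' := by rw [hM']; exact le_sup_left
  -- compositions with u are in L² of P
  have hcomp : ∀ f : Lp ℝ 2 μ, MemLp (fun ω => f (u ω)) 2 P := by
    intro f
    have h1 : MemLp (⇑f) 2 (P.map u) := by rw [hlaw]; exact Lp.memLp f
    exact h1.comp_of_map hu.aemeasurable
  -- products of L² functions are integrable
  have hmul : ∀ (f h : Ω → ℝ), MemLp f 2 P → MemLp h 2 P →
      Integrable (fun ω => f ω * h ω) P := by
    intro f h hf hh
    have h12 : (1 : ENNReal) / 1 = 1 / 2 + 1 / 2 := by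
      rw [one_div_one, one_div, ENNReal.inv_two_add_inv_two]
    have := MemLp.smul (φ := f) (f := h) (p := 2) (q := 2) (r := 1) hh hf
    simpa [smul_eq_mul, Pi.mul_def] using this.integrable le_rfl
  -- change of variables for squares
  have hsq : ∀ f : Lp ℝ 2 μ, ∫ ω, (f (u ω)) ^ 2 ∂P = ‖f‖ ^ 2 := by
    intro f
    have hasm : AEStronglyMeasurable (fun x => (f x) ^ 2) (P.map u) := by
      rw [hlaw]
      simpa [pow_two, Pi.mul_def] using (Lp.aestronglyMeasurable f).mul (Lp.aestronglyMeasurable f)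
    have h1 : ∫ ω, (f (u ω)) ^ 2 ∂P = ∫ x, (f x) ^ 2 ∂(P.map u) :=
      (integral_map hu.aemeasurable hasm).symm
    have h2 : (⟪f, f⟫ : ℝ) = ∫ x, f x * f x ∂μ := by
      rw [L2.inner_def f f]
      simp [RCLike.inner_apply]
      congr 1; funext x; ring
    rw [h1, hlaw, ← real_inner_self_eq_norm_sq, h2]
    simp [pow_two]
  -- a.e. pointwise subtraction pulls back along u
  have hae : ∀ f h : Lp ℝ 2 μ, ∀ᵐ ω ∂P, (f - h) (u ω) = f (u ω) - h (u ω) := by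
    intro f h
    have h1 : ∀ᵐ x ∂(P.map u), (f - h) x = f x - h x := by
      rw [hlaw]; exact Lp.coeFn_sub f h
    exact ae_of_ae_map hu.aemeasurable h1
  -- the MSE expansion
  have expand : ∀ f : Lp ℝ 2 μ, (∫ ω, f (u ω) * ν ω ∂P = 0) →
      ∫ ω, (d ω - f (u ω)) ^ 2 ∂P = ‖ψ - f‖ ^ 2 + ∫ ω, (ν ω) ^ 2 ∂P := by
    intro f hforth
    have hF : MemLp (fun ω => ψ (u ω) - f (u ω)) 2 P := (hcomp ψ).sub (hcomp f)
    have hint1 : Integrable (fun ω => (ψ (u ω) - f (u ω)) ^ 2) P := hF.integrable_sq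
    have hint2 : Integrable (fun ω => (ψ (u ω) - f (u ω)) * ν ω) P := hmul _ _ hF hν
    have hint3 : Integrable (fun ω => (ν ω) ^ 2) P := hν.integrable_sq
    have hstep : ∫ ω, (d ω - f (u ω)) ^ 2 ∂P
        = ∫ ω, ((ψ (u ω) - f (u ω)) ^ 2 + 2 * ((ψ (u ω) - f (u ω)) * ν ω) + (ν ω) ^ 2) ∂P := by
      rw [hd]; congr 1; funext ω; ring
    have hint4 : Integrable (fun ω => 2 * ((ψ (u ω) - f (u ω)) * ν ω)) P :=
      hint2.const_mul 2
    have hint12 : Integrable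
        (fun ω => (ψ (u ω) - f (u ω)) ^ 2 + 2 * ((ψ (u ω) - f (u ω)) * ν ω)) P :=
      hint1.add hint4
    rw [hstep, integral_add hint12 hint3, integral_add hint1 hint4, integral_const_mul]
    have hcross : ∫ ω, (ψ (u ω) - f (u ω)) * ν ω ∂P = 0 := by
      have h1 : ∫ ω, (ψ (u ω) - f (u ω)) * ν ω ∂P
          = (∫ ω, ψ (u ω) * ν ω ∂P) - ∫ ω, f (u ω) * ν ω ∂P := by
        rw [← integral_sub (hmul _ _ (hcomp ψ) hν) (hmul _ _ (hcomp f) hν)]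
        congr 1; funext ω; ring
      rw [h1, horthψ, hforth, sub_zero]
    have hFsq : ∫ ω, (ψ (u ω) - f (u ω)) ^ 2 ∂P = ‖ψ - f‖ ^ 2 := by
      rw [← hsq (ψ - f)]
      apply integral_congr_ae
      filter_upwards [hae ψ f] with ω h
      rw [h]
    rw [hcross, hFsq]; ring
  -- rewrite both integrals
  have e1 := expand (Submodule.orthogonalProjection M ψ : Lp ℝ 2 μ)
    (horth _ (hMle (Submodule.orthogonalProjection M ψ).2))
  have e2 := expand (Submodule.orthogonalProjection M' ψ : Lp ℝ 2 μ)
    (horth _ (Submodule.orthogonalProjection M' ψ).2)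
  rw [e1, e2]
  -- Pythagoras in M'
  have hperp : ψ - (Submodule.orthogonalProjection M' ψ : Lp ℝ 2 μ) ∈ M'ᗮ :=
    Submodule.sub_starProjection_mem_orthogonal (K := M') ψ
  have hpqmem : (Submodule.orthogonalProjection M' ψ : Lp ℝ 2 μ)
      - (Submodule.orthogonalProjection M ψ : Lp ℝ 2 μ) ∈ M' :=
    Submodule.sub_mem _ (Submodule.orthogonalProjection M' ψ).2 (hMle (Submodule.orthogonalProjection M ψ).2)
  have hinner : ⟪ψ - (Submodule.orthogonalProjection M' ψ : Lp ℝ 2 μ),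
      (Submodule.orthogonalProjection M' ψ : Lp ℝ 2 μ) - (Submodule.orthogonalProjection M ψ : Lp ℝ 2 μ)⟫ = 0 :=
    Submodule.inner_left_of_mem_orthogonal hpqmem hperp
  have hpyth : ‖ψ - (Submodule.orthogonalProjection M ψ : Lp ℝ 2 μ)‖ ^ 2
      = ‖ψ - (Submodule.orthogonalProjection M' ψ : Lp ℝ 2 μ)‖ ^ 2
        + ‖(Submodule.orthogonalProjection M' ψ : Lp ℝ 2 μ) - (Submodule.orthogonalProjection M ψ : Lp ℝ 2 μ)‖ ^ 2 := by
    have heq : ψ - (Submodule.orthogonalProjection M ψ : Lp ℝ 2 μ)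
        = (ψ - (Submodule.orthogonalProjection M' ψ : Lp ℝ 2 μ))
          + ((Submodule.orthogonalProjection M' ψ : Lp ℝ 2 μ) - (Submodule.orthogonalProjection M ψ : Lp ℝ 2 μ)) := by
      abel
    rw [heq, norm_add_sq_real, hinner]; ring
  -- key estimate on ‖p - q‖²
  have key : hstar ^ 2 * ‖g‖ ^ 2 * η
      ≤ ‖(Submodule.orthogonalProjection M' ψ : Lp ℝ 2 μ) - (Submodule.orthogonalProjection M ψ : Lp ℝ 2 μ)‖ ^ 2 := by
    rcases eq_or_ne hstar 0 with h0 | h0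
    · simpa [h0] using sq_nonneg
        ‖(Submodule.orthogonalProjection M' ψ : Lp ℝ 2 μ) - (Submodule.orthogonalProjection M ψ : Lp ℝ 2 μ)‖
    · set w : Lp ℝ 2 μ := hstar⁻¹ • ((Submodule.orthogonalProjection M ψ : Lp ℝ 2 μ) - m) with hw
      have hwM : w ∈ M :=
        Submodule.smul_mem _ _ (Submodule.sub_mem _ (Submodule.orthogonalProjection M ψ).2 hm)
      have hpq2 : (Submodule.orthogonalProjection M' ψ : Lp ℝ 2 μ)
          - (Submodule.orthogonalProjection M ψ : Lp ℝ 2 μ) = hstar • (g - w) := by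
        have hsw : hstar • w = (Submodule.orthogonalProjection M ψ : Lp ℝ 2 μ) - m := by
          rw [hw, smul_smul, mul_inv_cancel₀ h0, one_smul]
        rw [hdecomp, smul_sub, hsw]; abel
      have hnorm : ‖(Submodule.orthogonalProjection M' ψ : Lp ℝ 2 μ)
          - (Submodule.orthogonalProjection M ψ : Lp ℝ 2 μ)‖ ^ 2 = hstar ^ 2 * ‖g - w‖ ^ 2 := by
        rw [hpq2, norm_smul]
        simp [mul_pow, sq_abs, Real.norm_eq_abs]
      have hgperp : g - (Submodule.orthogonalProjection M g : Lp ℝ 2 μ) ∈ Mᗮ :=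
        Submodule.sub_starProjection_mem_orthogonal (K := M) g
      have hmem : (Submodule.orthogonalProjection M g : Lp ℝ 2 μ) - w ∈ M :=
        Submodule.sub_mem _ (Submodule.orthogonalProjection M g).2 hwM
      have hinn2 : ⟪g - (Submodule.orthogonalProjection M g : Lp ℝ 2 μ),
          (Submodule.orthogonalProjection M g : Lp ℝ 2 μ) - w⟫ = 0 :=
        Submodule.inner_left_of_mem_orthogonal hmem hgperp
      have hgw : ‖g - w‖ ^ 2 = ‖g - (Submodule.orthogonalProjection M g : Lp ℝ 2 μ)‖ ^ 2
          + ‖(Submodule.orthogonalProjection M g : Lp ℝ 2 μ) - w‖ ^ 2 := by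
        have heq : g - w = (g - (Submodule.orthogonalProjection M g : Lp ℝ 2 μ))
            + ((Submodule.orthogonalProjection M g : Lp ℝ 2 μ) - w) := by abel
        rw [heq, norm_add_sq_real, hinn2]; ring
      have h1 : η * ‖g‖ ^ 2 ≤ ‖g - w‖ ^ 2 := by
        nlinarith [sq_nonneg ‖(Submodule.orthogonalProjection M g : Lp ℝ 2 μ) - w‖]
      rw [hnorm]
      calc hstar ^ 2 * ‖g‖ ^ 2 * η = hstar ^ 2 * (η * ‖g‖ ^ 2) := by ring
        _ ≤ hstar ^ 2 * ‖g - w‖ ^ 2 := by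
            exact mul_le_mul_of_nonneg_left h1 (sq_nonneg _)
  linarith [key, hpyth]
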